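/- Let ω : ℝ → ℝ be a continuous function, and let ρ, q : ℝ → ℝ be twice differentiable functions with ρ(t) ≠ 0 for all t, such that ρ satisfies ρ''(t) + ω(t)²·ρ(t) = 1/ρ(t)³ for all t and q satisfies q''(t) + ω(t)²·q(t) = 0 for all t. Then the Ermakov–Lewis invariant I(t) = (1/2)·((ρ(t)·q'(t) − ρ'(t)·q(t))² + (q(t)/ρ(t))²) is constant, i.e. I(t) = I(0) for all t. -/

import Mathlib

/-- The Ermakov–Lewis invariant: for `ρ` solving the time-dependent auxiliary
equation `ρ'' + ω(t)² ρ = 1/ρ³` and `q` solving `q'' + ω(t)² q = 0`, the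
quantity `I = (1/2)((ρ q' − ρ' q)² + (q/ρ)²)` is constant. -/
theorem ermakov_lewis_invariant_constant
    (ω : ℝ → ℝ) (hω : Continuous ω) (ρ q : ℝ → ℝ)
    (hρ : Differentiable ℝ ρ) (hρ' : Differentiable ℝ (deriv ρ))
    (hq : Differentiable ℝ q) (hq' : Differentiable ℝ (deriv q))
    (hρne : ∀ t, ρ t ≠ 0)
    (hρeq : ∀ t, deriv (deriv ρ) t + (ω t) ^ 2 * ρ t = 1 / (ρ t) ^ 3)
    (hqeq : ∀ t, deriv (deriv q) t + (ω t) ^ 2 * q t = 0) :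
    ∀ t, (1 / 2) * ((ρ t * deriv q t - deriv ρ t * q t) ^ 2
          + (q t / ρ t) ^ 2)
        = (1 / 2) * ((ρ 0 * deriv q 0 - deriv ρ 0 * q 0) ^ 2
          + (q 0 / ρ 0) ^ 2) := by
  set I : ℝ → ℝ := fun t => (1 / 2) * ((ρ t * deriv q t - deriv ρ t * q t) ^ 2
          + (q t / ρ t) ^ 2) with hI
  have key : ∀ t, HasDerivAt I 0 t := by
    intro t
    have hρt := (hρ t).hasDerivAt
    have hρ't := (hρ' t).hasDerivAt
    have hqt := (hq t).hasDerivAt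
    have hq't := (hq' t).hasDerivAt
    have hW : HasDerivAt (fun t => ρ t * deriv q t - deriv ρ t * q t)
        (ρ t * deriv (deriv q) t - deriv (deriv ρ) t * q t) t := by
      have := ((hρt.mul hq't).sub (hρ't.mul hqt))
      refine this.congr_deriv ?_
      ring
    have hQ : HasDerivAt (fun t => q t / ρ t)
        ((deriv q t * ρ t - q t * deriv ρ t) / (ρ t) ^ 2) t :=
      hqt.div hρt (hρne t)
    have h := ((hW.pow 2).add (hQ.pow 2)).const_mul ((1:ℝ)/2)
    refine h.congr_deriv ?_
    have hρe := hρeq t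
    have hqe := hqeq t
    have hq'' : deriv (deriv q) t = -(ω t ^ 2 * q t) := by linarith
    have hρ'' : deriv (deriv ρ) t = 1 / (ρ t) ^ 3 - ω t ^ 2 * ρ t := by linarith
    rw [hq'', hρ'']
    norm_num
    field_simp [hρne t]
    ring
  have hconst : ∀ t, I t = I 0 := by
    intro t
    apply is_const_of_deriv_eq_zero (f := I)
    · exact fun s => (key s).differentiableAt
    · exact fun s => (key s).deriv
  exact hconst
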